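/- The number of Castelnuovo functions of weight n equals the number of partitions of n into distinct parts. -/

import Mathlib

/-- A Castelnuovo function: `s 0 = 1, s 1 = 2, …, s (σ-1) = σ` and
`s (σ-1) ≥ s σ ≥ s (σ+1) ≥ ⋯ ≥ 0` for some `σ ≥ 0`, finitely supported,
and vanishing in negative degrees. -/
def CastelnuovoZ (s : ℤ → ℤ) : Prop :=
  (∀ m, 0 ≤ s m) ∧ (∀ m, m < 0 → s m = 0) ∧ (∃ N : ℤ, ∀ m, N ≤ m → s m = 0) ∧
  ∃ σ : ℕ, (∀ i : ℕ, i < σ → s i = i + 1) ∧ ∀ m : ℤ, (σ : ℤ) - 1 ≤ m → s (m + 1) ≤ s m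

namespace CastAux

open Finset

/-- rank: number of elements of `P` bigger than `d`. -/
def rk (P : Finset ℕ) (d : ℕ) : ℕ := (P.filter (fun e => d < e)).card

/-- The Castelnuovo function associated to a finset of (distinct) parts. -/
def cfun (P : Finset ℕ) (i : ℤ) : ℤ :=
  ((P.filter (fun d => (rk P d : ℤ) ≤ i ∧ i < rk P d + d)).card : ℤ)

variable {P : Finset ℕ}

theorem rk_lt_card {d : ℕ} (hd : d ∈ P) : rk P d < P.card := by
  apply Finset.card_lt_card
  constructor
  · exact Finset.filter_subset _ _
  · intro hsub
    have := hsub hd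
    simp at this

theorem rk_add_mono {d e : ℕ} (hde : d ≤ e) : rk P d + d ≤ rk P e + e := by
  have h1 : P.filter (fun x => d < x) ⊆ P.filter (fun x => e < x) ∪ Finset.Ioc d e := by
    intro x hx
    simp only [Finset.mem_filter, Finset.mem_union, Finset.mem_Ioc] at hx ⊢
    rcases le_or_gt x e with h | h
    · exact Or.inr ⟨hx.2, h⟩
    · exact Or.inl ⟨hx.1, h⟩
  have h2 := (Finset.card_le_card h1).trans (Finset.card_union_le _ _)
  rw [Nat.card_Ioc] at h2
  unfold rk
  omega

theorem rk_strict_anti {d e : ℕ} (he : e ∈ P) (hde : d < e) : rk P e < rk P d := by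
  apply Finset.card_lt_card
  constructor
  · intro x hx
    simp only [Finset.mem_filter] at hx ⊢
    exact ⟨hx.1, by omega⟩
  · intro hsub
    have : e ∈ P.filter (fun x => e < x) := hsub (by simp [Finset.mem_filter, he, hde])
    simp at this

theorem rk_injOn : Set.InjOn (rk P) P := by
  intro a ha b hb hab
  by_contra hne
  rcases Nat.lt_or_ge a b with h | h
  · exact absurd hab (rk_strict_anti hb h).ne'
  · have : b < a := by omega
    exact absurd hab (rk_strict_anti ha this).ne

theorem image_rk : P.image (rk P) = Finset.range P.card := by
  apply Finset.eq_of_subset_of_card_le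
  · intro x hx
    simp only [Finset.mem_image] at hx
    obtain ⟨d, hd, rfl⟩ := hx
    simpa using rk_lt_card hd
  · rw [Finset.card_range, Finset.card_image_of_injOn rk_injOn]

theorem card_rk_le (j : ℕ) : (P.filter (fun e => rk P e ≤ j)).card = min (j + 1) P.card := by
  have h1 : (P.filter (fun e => rk P e ≤ j)).image (rk P) =
      (P.image (rk P)).filter (fun x => x ≤ j) :=
    (Finset.filter_image (s := P) (f := rk P) (p := fun x => x ≤ j)).symm
  have h2 : ((P.filter (fun e => rk P e ≤ j)).image (rk P)).card =
      (P.filter (fun e => rk P e ≤ j)).card :=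
    Finset.card_image_of_injOn (rk_injOn.mono (by intro x hx; exact (Finset.mem_filter.mp hx).1))
  rw [← h2, h1, image_rk]
  have : (Finset.range P.card).filter (fun x => x ≤ j) = Finset.range (min (j+1) P.card) := by
    ext x; simp [Finset.mem_range, Finset.mem_filter]; omega
  rw [this, Finset.card_range]

theorem card_rk_lt (j : ℕ) : (P.filter (fun e => rk P e < j)).card = min j P.card := by
  have h1 : (P.filter (fun e => rk P e < j)).image (rk P) =
      (P.image (rk P)).filter (fun x => x < j) :=
    (Finset.filter_image (s := P) (f := rk P) (p := fun x => x < j)).symm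
  have h2 : ((P.filter (fun e => rk P e < j)).image (rk P)).card =
      (P.filter (fun e => rk P e < j)).card :=
    Finset.card_image_of_injOn (rk_injOn.mono (by intro x hx; exact (Finset.mem_filter.mp hx).1))
  rw [← h2, h1, image_rk]
  have : (Finset.range P.card).filter (fun x => x < j) = Finset.range (min j P.card) := by
    ext x; simp [Finset.mem_range, Finset.mem_filter]; omega
  rw [this, Finset.card_range]

theorem card_le_rk_add (hpos : ∀ x ∈ P, 0 < x) {e : ℕ} :
    P.card ≤ rk P e + e := by
  have h1 : P ⊆ P.filter (fun x => e < x) ∪ Finset.Icc 1 e := by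
    intro x hx
    simp only [Finset.mem_union, Finset.mem_filter, Finset.mem_Icc]
    rcases le_or_gt x e with h | h
    · exact Or.inr ⟨hpos x hx, h⟩
    · exact Or.inl ⟨hx, h⟩
  have h2 := (Finset.card_le_card h1).trans (Finset.card_union_le _ _)
  rw [Nat.card_Icc] at h2
  unfold rk
  omega


theorem cfun_nonneg (i : ℤ) : 0 ≤ cfun P i := Int.natCast_nonneg _

theorem cfun_neg {i : ℤ} (hi : i < 0) : cfun P i = 0 := by
  unfold cfun
  rw [Finset.filter_false_of_mem, Finset.card_empty, Nat.cast_zero]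
  intro d _
  push_neg
  intro h
  exfalso
  have : (0:ℤ) ≤ rk P d := Int.natCast_nonneg _
  omega

theorem cfun_le_card (i : ℤ) : cfun P i ≤ P.card := by
  unfold cfun
  exact_mod_cast Finset.card_le_card (Finset.filter_subset _ _)

theorem cfun_zero_of_large {i : ℤ} (hi : (P.card : ℤ) + (∑ d ∈ P, (d : ℤ)) ≤ i) :
    cfun P i = 0 := by
  unfold cfun
  rw [Finset.filter_false_of_mem, Finset.card_empty, Nat.cast_zero]
  intro d hd
  push_neg
  intro _
  have h1 : (rk P d : ℤ) ≤ P.card := by exact_mod_cast (rk_lt_card hd).le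
  have h2 : (d : ℤ) ≤ ∑ e ∈ P, (e : ℤ) :=
    Finset.single_le_sum (fun x _ => by positivity) hd
  omega

/-- Key lemma: the set where `cfun P` is `≥ rk P d + 1` is exactly the "row" of `d`. -/
theorem keyB {d : ℕ} (hd : d ∈ P) (i : ℤ) :
    (rk P d : ℤ) + 1 ≤ cfun P i ↔ ((rk P d : ℤ) ≤ i ∧ i < rk P d + d) := by
  constructor
  · intro h
    by_contra hcon
    push_neg at hcon
    have hbound : (P.filter (fun e => (rk P e : ℤ) ≤ i ∧ i < rk P e + e)).card ≤ rk P d := by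
      have hsub : P.filter (fun e => (rk P e : ℤ) ≤ i ∧ i < rk P e + e) ⊆
          P.filter (fun e => rk P e < rk P d) := by
        intro x hx
        simp only [Finset.mem_filter] at hx ⊢
        refine ⟨hx.1, ?_⟩
        rcases lt_or_ge i (rk P d : ℤ) with hlt | hge
        · have := hx.2.1
          omega
        · have hge2 : (rk P d : ℤ) + d ≤ i := hcon hge
          have h2 := hx.2.2
          have hxd : d < x := by
            by_contra hle
            push_neg at hle
            have hm : (rk P x : ℤ) + x ≤ (rk P d : ℤ) + d := by
              exact_mod_cast rk_add_mono (P := P) hle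
            omega
          exact rk_strict_anti hx.1 hxd
      exact le_trans (le_trans (Finset.card_le_card hsub) (card_rk_lt (rk P d)).le)
        (min_le_left _ _)
    unfold cfun at h
    omega
  · rintro ⟨h1, h2⟩
    -- all parts e with rk P e ≤ rk P d cover column i
    have hsub : P.filter (fun e => rk P e ≤ rk P d) ⊆
        P.filter (fun e => (rk P e : ℤ) ≤ i ∧ i < rk P e + e) := by
      intro x hx
      simp only [Finset.mem_filter] at hx ⊢
      refine ⟨hx.1, by exact_mod_cast le_trans (by exact_mod_cast hx.2) h1, ?_⟩
      have hdx : d ≤ x := by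
        by_contra hlt
        push_neg at hlt
        have := rk_strict_anti hd hlt
        omega
      have := rk_add_mono (P := P) hdx
      omega
    have hcard := Finset.card_le_card hsub
    rw [card_rk_le (rk P d)] at hcard
    have hk := rk_lt_card hd
    have : min (rk P d + 1) P.card = rk P d + 1 := by omega
    rw [this] at hcard
    unfold cfun
    exact_mod_cast hcard


theorem cfun_stair (hpos : ∀ x ∈ P, 0 < x) (i : ℕ) (hi : i < P.card) :
    cfun P i = i + 1 := by
  unfold cfun
  have hfe : P.filter (fun d => (rk P d : ℤ) ≤ (i:ℤ) ∧ (i:ℤ) < rk P d + d) =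
      P.filter (fun d => rk P d ≤ i) := by
    apply Finset.filter_congr
    intro x hx
    constructor
    · rintro ⟨h1, _⟩
      exact_mod_cast h1
    · intro h1
      refine ⟨by exact_mod_cast h1, ?_⟩
      have h2 : (P.card : ℤ) ≤ (rk P x : ℤ) + x := by
        exact_mod_cast card_le_rk_add hpos (e := x)
      omega
  rw [hfe, card_rk_le]
  have : min (i+1) P.card = i + 1 := by omega
  rw [this]
  push_cast
  ring

theorem cfun_dec {P : Finset ℕ} (m : ℤ) (hm : (P.card : ℤ) - 1 ≤ m) : cfun P (m+1) ≤ cfun P m := by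
  unfold cfun
  have hsub : P.filter (fun d => (rk P d : ℤ) ≤ m+1 ∧ m+1 < rk P d + d) ⊆
      P.filter (fun d => (rk P d : ℤ) ≤ m ∧ m < rk P d + d) := by
    intro x hx
    simp only [Finset.mem_filter] at hx ⊢
    refine ⟨hx.1, ?_, by omega⟩
    have h1 : (rk P x : ℤ) ≤ P.card - 1 := by
      have := rk_lt_card hx.1
      omega
    omega
  exact_mod_cast Finset.card_le_card hsub

theorem cfun_castelnuovo (hpos : ∀ x ∈ P, 0 < x) : CastelnuovoZ (cfun P) := by
  refine ⟨cfun_nonneg, fun m hm => cfun_neg hm,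
    ⟨(P.card : ℤ) + (∑ d ∈ P, (d : ℤ)), fun m hm => cfun_zero_of_large hm⟩,
    P.card, fun i hi => cfun_stair hpos i hi, cfun_dec⟩

theorem cfun_weight (hpos : ∀ x ∈ P, 0 < x) :
    ∑ᶠ m : ℤ, cfun P m = ∑ d ∈ P, (d : ℤ) := by
  set B : ℤ := (P.card : ℤ) + (∑ d ∈ P, (d : ℤ)) with hB
  have hBnn : 0 ≤ ∑ d ∈ P, (d : ℤ) := Finset.sum_nonneg (fun x _ => by positivity)
  have hsupp : Function.support (cfun P) ⊆ ↑(Finset.Icc (0:ℤ) B) := by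
    intro m hm
    simp only [Function.mem_support] at hm
    simp only [Finset.coe_Icc, Set.mem_Icc]
    constructor
    · by_contra h
      exact hm (cfun_neg (by omega))
    · by_contra h
      exact hm (cfun_zero_of_large (by omega))
  rw [finsum_eq_sum_of_support_subset _ hsupp]
  unfold cfun
  push_cast [Finset.card_filter]
  rw [Finset.sum_comm]
  apply Finset.sum_congr rfl
  intro d hd
  have hrow : ∀ i ∈ Finset.Icc (0:ℤ) B,
      ((if (rk P d : ℤ) ≤ i ∧ i < rk P d + d then (1:ℤ) else 0)) =
      (if i ∈ Finset.Icc (rk P d : ℤ) ((rk P d : ℤ) + d - 1) then (1:ℤ) else 0) := by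
    intro i _
    congr 1
    simp only [Finset.mem_Icc, eq_iff_iff]
    omega
  rw [Finset.sum_congr rfl hrow, Finset.sum_ite_mem]
  have hss : Finset.Icc (0:ℤ) B ∩ Finset.Icc (rk P d : ℤ) ((rk P d : ℤ) + d - 1) =
      Finset.Icc (rk P d : ℤ) ((rk P d : ℤ) + d - 1) := by
    apply Finset.inter_eq_right.mpr
    intro x hx
    simp only [Finset.mem_Icc] at hx ⊢
    have h1 : (rk P d : ℤ) < P.card := by exact_mod_cast rk_lt_card hd
    have h2 : (d : ℤ) ≤ ∑ e ∈ P, (e : ℤ) :=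
      Finset.single_le_sum (fun x _ => by positivity) hd
    omega
  rw [hss, Finset.sum_const, Int.card_Icc]
  have : ((rk P d : ℤ) + d - 1 + 1 - rk P d) = (d : ℤ) := by ring
  rw [this]
  simp


open Classical in
noncomputable def sigma (s : ℤ → ℤ) : ℕ :=
  if h : ∃ σ : ℕ, (∀ i : ℕ, i < σ → s i = i + 1) ∧ ∀ m : ℤ, (σ : ℤ) - 1 ≤ m → s (m + 1) ≤ s m
  then h.choose else 0

noncomputable def tval (s : ℤ → ℤ) (r : ℕ) : ℕ := Set.ncard {m : ℤ | (r : ℤ) ≤ s m}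

noncomputable def psi (s : ℤ → ℤ) : Finset ℕ :=
  Finset.image (fun r => tval s (r + 1)) (Finset.range (sigma s))

section General

variable {s : ℤ → ℤ} (hs : CastelnuovoZ s)

/-- specification of a staircase length -/
def Spec (s : ℤ → ℤ) (σ : ℕ) : Prop :=
  (∀ i : ℕ, i < σ → s i = i + 1) ∧ ∀ m : ℤ, (σ : ℤ) - 1 ≤ m → s (m + 1) ≤ s m

include hs

theorem sigma_spec : Spec s (sigma s) := by
  have h := hs.2.2.2
  unfold sigma
  rw [dif_pos h]
  exact h.choose_spec

theorem spec_anti {σ : ℕ} (hsp : Spec s σ) {a b : ℤ} (ha : (σ : ℤ) - 1 ≤ a) (hab : a ≤ b) :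
    s b ≤ s a := by
  refine Int.le_induction (motive := fun b _ => s b ≤ s a) (le_refl _) ?_ b hab
  intro b hb ih
  exact le_trans (hsp.2 b (by omega)) ih

theorem spec_unique {σ₁ σ₂ : ℕ} (h1 : Spec s σ₁) (h2 : Spec s σ₂) : σ₁ = σ₂ := by
  by_contra hne
  wlog hlt : σ₁ < σ₂ generalizing σ₁ σ₂
  · exact this h2 h1 (Ne.symm hne) (by omega)
  -- s σ₁ = σ₁ + 1 from the staircase of σ₂
  have hv : s (σ₁ : ℤ) = (σ₁ : ℤ) + 1 := by exact_mod_cast h2.1 σ₁ hlt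
  rcases Nat.eq_zero_or_pos σ₁ with h0 | h0
  · -- s 0 ≤ s (-1) = 0
    have hd := h1.2 (-1) (by simp [h0])
    have hneg := hs.2.1 (-1) (by norm_num)
    rw [h0] at hv
    norm_num at hd hv
    omega
  · have hd := h1.2 ((σ₁ : ℤ) - 1) (by omega)
    have hv2 : s ((σ₁ : ℤ) - 1) = (σ₁ : ℤ) := by
      have := h2.1 (σ₁ - 1) (by omega)
      have hc : (((σ₁ - 1 : ℕ) : ℤ)) = (σ₁ : ℤ) - 1 := by omega
      rw [hc] at this
      omega
    rw [sub_add_cancel, hv, hv2] at hd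
    omega

theorem le_sigma (m : ℤ) : s m ≤ sigma s := by
  have hsp := sigma_spec hs
  set σ := sigma s with hσ
  rcases lt_or_ge m 0 with hm | hm
  · rw [hs.2.1 m hm]; positivity
  rcases lt_or_ge m (σ : ℤ) with hm2 | hm2
  · have : s m = m + 1 := by
      have := hsp.1 m.toNat (by omega)
      have hc : ((m.toNat : ℕ) : ℤ) = m := by omega
      rw [hc] at this
      omega
    omega
  · rcases Nat.eq_zero_or_pos σ with h0 | h0
    · have := spec_anti hs hsp (a := -1) (b := m) (by simp [h0]) (by omega)
      have hneg := hs.2.1 (-1) (by norm_num)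
      omega
    · have hanti := spec_anti hs hsp (a := (σ : ℤ) - 1) (b := m) (by omega) (by omega)
      have hv2 : s ((σ : ℤ) - 1) = (σ : ℤ) := by
        have := hsp.1 (σ - 1) (by omega)
        have hc : (((σ - 1 : ℕ) : ℤ)) = (σ : ℤ) - 1 := by omega
        rw [hc] at this
        omega
      omega

theorem stairZ {m : ℤ} (hm : 0 ≤ m) (hm2 : m < (sigma s : ℤ)) : s m = m + 1 := by
  have := (sigma_spec hs).1 m.toNat (by omega)
  have hc : ((m.toNat : ℕ) : ℤ) = m := by omega
  rw [hc] at this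
  omega

theorem K2 {r : ℕ} (hr : 1 ≤ r) (hrs : r ≤ sigma s) :
    (∀ i : ℤ, ((r : ℤ) ≤ s i ↔ ((r : ℤ) - 1 ≤ i ∧ i ≤ (r : ℤ) - 2 + tval s r))) ∧
      1 ≤ tval s r := by
  obtain ⟨N, hN⟩ := hs.2.2.1
  have hsp := sigma_spec hs
  set σ := sigma s with hσ
  set S := {m : ℤ | (r : ℤ) ≤ s m} with hS
  have hfin : S.Finite := by
    apply (Set.finite_Icc 0 (N - 1)).subset
    intro m hm
    simp only [hS, Set.mem_setOf_eq] at hm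
    simp only [Set.mem_Icc]
    constructor
    · by_contra h
      rw [hs.2.1 m (by omega)] at hm
      omega
    · by_contra h
      rw [hN m (by omega)] at hm
      omega
  have hmemF : ∀ m : ℤ, m ∈ hfin.toFinset ↔ (r : ℤ) ≤ s m := by
    intro m
    rw [Set.Finite.mem_toFinset]
    rfl
  have hne : ((r : ℤ) - 1) ∈ hfin.toFinset := by
    rw [hmemF]
    have := stairZ hs (m := (r : ℤ) - 1) (by omega) (by omega)
    omega
  set e := hfin.toFinset.max' ⟨_, hne⟩ with he
  have heS : (r : ℤ) ≤ s e := by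
    rw [← hmemF]
    exact hfin.toFinset.max'_mem _
  have hre : (r : ℤ) - 1 ≤ e := hfin.toFinset.le_max' _ hne
  have hFe : hfin.toFinset = Finset.Icc ((r : ℤ) - 1) e := by
    ext m
    rw [hmemF, Finset.mem_Icc]
    constructor
    · intro hm
      refine ⟨?_, hfin.toFinset.le_max' m ((hmemF m).mpr hm)⟩
      by_contra h
      push_neg at h
      rcases lt_or_ge m 0 with h2 | h2
      · rw [hs.2.1 m h2] at hm
        omega
      · rw [stairZ hs h2 (by omega)] at hm
        omega
    · rintro ⟨h1, h2⟩
      rcases lt_or_ge m (σ : ℤ) with h3 | h3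
      · rw [stairZ hs (by omega) h3]
        omega
      · exact le_trans heS (spec_anti hs hsp (by omega) h2)
  have htv : tval s r = ((Finset.Icc ((r : ℤ) - 1) e).card) := by
    rw [tval, Set.ncard_eq_toFinset_card _ hfin, hFe]
  rw [Int.card_Icc] at htv
  have htv2 : (tval s r : ℤ) = e - r + 2 := by
    rw [htv]
    omega
  constructor
  · intro i
    rw [show ((r:ℤ) - 2 + tval s r) = e by omega]
    have := (hmemF i)
    rw [hFe, Finset.mem_Icc] at this
    omega
  · omega

theorem tval_anti {r r' : ℕ} (hr : 1 ≤ r) (hrr : r ≤ r') : tval s r' ≤ tval s r := by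
  obtain ⟨N, hN⟩ := hs.2.2.1
  have hfin : {m : ℤ | (r : ℤ) ≤ s m}.Finite := by
    apply (Set.finite_Icc 0 (N - 1)).subset
    intro m hm
    simp only [Set.mem_setOf_eq] at hm
    simp only [Set.mem_Icc]
    constructor
    · by_contra h
      rw [hs.2.1 m (by omega)] at hm
      omega
    · by_contra h
      rw [hN m (by omega)] at hm
      omega
  apply Set.ncard_le_ncard _ hfin
  intro m hm
  simp only [Set.mem_setOf_eq] at hm ⊢
  omega

theorem tval_strict_anti {r : ℕ} (hr : 1 ≤ r) (hrs : r + 1 ≤ sigma s) :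
    tval s (r + 1) < tval s r := by
  obtain ⟨K2r, htr⟩ := K2 hs hr (by omega)
  obtain ⟨K2r', htr'⟩ := K2 hs (r := r + 1) (by omega) hrs
  -- the max of S_{r+1} lies in S_r
  set i₀ : ℤ := (r : ℤ) - 1 + tval s (r + 1) with hi₀
  have hmem : ((r : ℤ) + 1) ≤ s i₀ := by
    have := K2r' i₀
    push_cast at this
    omega
  have hmem2 : (r : ℤ) ≤ s i₀ := by omega
  rw [K2r] at hmem2
  omega

theorem tval_lt {r r' : ℕ} (hr : 1 ≤ r) (hrr : r < r') (hrs : r' ≤ sigma s) :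
    tval s r' < tval s r :=
  lt_of_le_of_lt (tval_anti hs (by omega) (by omega))
    (tval_strict_anti hs hr (by omega))

theorem psi_injOn : Set.InjOn (fun r => tval s (r + 1)) (Finset.range (sigma s)) := by
  intro a ha b hb hab
  simp only [Finset.coe_range, Set.mem_Iio] at ha hb
  by_contra hne
  rcases Nat.lt_or_ge a b with h | h
  · exact absurd hab (tval_lt hs (by omega) (by omega) (by omega)).ne'
  · have : b < a := by omega
    exact absurd hab (tval_lt hs (r := b+1) (r' := a+1) (by omega) (by omega) (by omega)).ne

theorem psi_card : (psi s).card = sigma s := by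
  rw [psi, Finset.card_image_of_injOn (psi_injOn hs), Finset.card_range]

theorem psi_pos : ∀ d ∈ psi s, 0 < d := by
  intro d hd
  rw [psi, Finset.mem_image] at hd
  obtain ⟨r, hr, rfl⟩ := hd
  rw [Finset.mem_range] at hr
  exact (K2 hs (r := r + 1) (by omega) (by omega)).2

theorem rk_psi {r : ℕ} (hr : 1 ≤ r) (hrs : r ≤ sigma s) :
    rk (psi s) (tval s r) = r - 1 := by
  unfold rk psi
  rw [Finset.filter_image]
  have hfe : (Finset.range (sigma s)).filter (fun r' => tval s r < tval s (r' + 1)) =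
      Finset.range (r - 1) := by
    ext r'
    simp only [Finset.mem_filter, Finset.mem_range]
    constructor
    · rintro ⟨h1, h2⟩
      by_contra h
      push_neg at h
      have : r ≤ r' + 1 := by omega
      exact absurd h2 (not_lt.mpr (tval_anti hs hr this))
    · intro h
      exact ⟨by omega, tval_lt hs (by omega) (by omega) hrs⟩
  rw [hfe]
  rw [Finset.card_image_of_injOn ((psi_injOn hs).mono ?_), Finset.card_range]
  intro x hx
  simp only [Finset.coe_range, Finset.mem_coe, Finset.mem_range, Set.mem_Iio] at hx ⊢
  omega

theorem cfun_psi (i : ℤ) : cfun (psi s) i = s i := by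
  unfold cfun
  have h0 : (psi s).filter (fun d => (rk (psi s) d : ℤ) ≤ i ∧ i < rk (psi s) d + d) =
      ((Finset.range (sigma s)).filter
        (fun r' => (rk (psi s) (tval s (r' + 1)) : ℤ) ≤ i ∧
          i < rk (psi s) (tval s (r' + 1)) + tval s (r' + 1))).image
        (fun r => tval s (r + 1)) :=
    Finset.filter_image (s := Finset.range (sigma s)) (f := fun r => tval s (r + 1))
      (p := fun d => (rk (psi s) d : ℤ) ≤ i ∧ i < rk (psi s) d + d)
  rw [h0]
  rw [Finset.card_image_of_injOn ((psi_injOn hs).mono (fun x hx =>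
    (Finset.mem_filter.mp hx).1))]
  have hfe : (Finset.range (sigma s)).filter
      (fun r' => (rk (psi s) (tval s (r' + 1)) : ℤ) ≤ i ∧
        i < rk (psi s) (tval s (r' + 1)) + tval s (r' + 1)) =
      Finset.range (sigma s) ∩ Finset.range ((s i).toNat) := by
    ext r'
    simp only [Finset.mem_filter, Finset.mem_inter, Finset.mem_range]
    constructor
    · rintro ⟨h1, h2, h3⟩
      refine ⟨h1, ?_⟩
      rw [rk_psi hs (by omega) (by omega)] at h2 h3
      have hK := ((K2 hs (r := r' + 1) (by omega) (by omega)).1 i).mpr (by push_cast; push_cast at h2 h3; constructor <;> omega)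
      push_cast at hK
      omega
    · rintro ⟨h1, h2⟩
      refine ⟨h1, ?_⟩
      rw [rk_psi hs (by omega) (by omega)]
      have hK := ((K2 hs (r := r' + 1) (by omega) (by omega)).1 i).mp (by push_cast; omega)
      push_cast at hK
      constructor <;> [skip; skip] <;> push_cast <;> omega
  rw [hfe]
  have hint : Finset.range (sigma s) ∩ Finset.range ((s i).toNat) =
      Finset.range ((s i).toNat) := by
    apply Finset.inter_eq_right.mpr
    intro x hx
    simp only [Finset.mem_range] at hx ⊢
    have := le_sigma hs i
    omega
  rw [hint, Finset.card_range]
  have := hs.1 i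
  omega

theorem weight_eq_psi_sum : ∑ᶠ m : ℤ, s m = ∑ d ∈ psi s, (d : ℤ) := by
  obtain ⟨N, hN⟩ := hs.2.2.1
  have hsupp : Function.support s ⊆ ↑(Finset.Icc (0:ℤ) (N-1)) := by
    intro m hm
    simp only [Function.mem_support] at hm
    simp only [Finset.coe_Icc, Set.mem_Icc]
    constructor
    · by_contra h
      exact hm (hs.2.1 m (by omega))
    · by_contra h
      exact hm (hN m (by omega))
  rw [finsum_eq_sum_of_support_subset _ hsupp]
  set σ := sigma s with hσ
  have key : ∀ v : ℤ, 0 ≤ v → v ≤ (σ : ℤ) →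
      ∑ r' ∈ Finset.range σ, (if ((r' : ℤ) + 1) ≤ v then (1:ℤ) else 0) = v := by
    intro v h0 h1
    rw [Finset.sum_ite, Finset.sum_const, Finset.sum_const_zero, add_zero]
    have hfv : (Finset.range σ).filter (fun r' : ℕ => ((r' : ℤ) + 1) ≤ v) =
        Finset.range v.toNat := by
      ext r'
      simp only [Finset.mem_filter, Finset.mem_range]
      omega
    rw [hfv, Finset.card_range]
    simp
    omega
  calc ∑ m ∈ Finset.Icc (0:ℤ) (N-1), s m
      = ∑ m ∈ Finset.Icc (0:ℤ) (N-1), ∑ r' ∈ Finset.range σ,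
          (if ((r' : ℤ) + 1) ≤ s m then (1:ℤ) else 0) := by
        apply Finset.sum_congr rfl
        intro m _
        exact (key (s m) (hs.1 m) (le_sigma hs m)).symm
    _ = ∑ r' ∈ Finset.range σ, ∑ m ∈ Finset.Icc (0:ℤ) (N-1),
          (if ((r' : ℤ) + 1) ≤ s m then (1:ℤ) else 0) := Finset.sum_comm
    _ = ∑ r' ∈ Finset.range σ, (tval s (r' + 1) : ℤ) := by
        apply Finset.sum_congr rfl
        intro r' hr'
        rw [Finset.mem_range] at hr'
        obtain ⟨hK, ht⟩ := K2 hs (r := r' + 1) (by omega) (by omega)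
        rw [Finset.sum_ite, Finset.sum_const, Finset.sum_const_zero, add_zero]
        have hfe : (Finset.Icc (0:ℤ) (N-1)).filter (fun m => ((r' : ℤ) + 1) ≤ s m) =
            Finset.Icc ((r' : ℤ)) ((r' : ℤ) - 1 + tval s (r' + 1)) := by
          ext m
          simp only [Finset.mem_filter, Finset.mem_Icc]
          have hKm := hK m
          push_cast at hKm
          constructor
          · rintro ⟨-, h2⟩
            omega
          · intro h
            have hsm : ((r' : ℤ) + 1) ≤ s m := by omega
            refine ⟨⟨?_, ?_⟩, hsm⟩
            · by_contra hc
              rw [hs.2.1 m (by omega)] at hsm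
              omega
            · by_contra hc
              rw [hN m (by omega)] at hsm
              omega
        rw [hfe, Int.card_Icc]
        simp
        omega
    _ = ∑ d ∈ psi s, (d : ℤ) := by
        rw [psi]
        exact (Finset.sum_image (fun x hx y hy h =>
          psi_injOn hs (Finset.mem_coe.mpr hx) (Finset.mem_coe.mpr hy) h)).symm

end General

theorem tval_cfun {P : Finset ℕ} {d : ℕ} (hd : d ∈ P) :
    tval (cfun P) (rk P d + 1) = d := by
  unfold tval
  have hset : {m : ℤ | ((rk P d + 1 : ℕ) : ℤ) ≤ cfun P m} =
      ↑(Finset.Ico ((rk P d : ℤ)) ((rk P d : ℤ) + d)) := by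
    ext m
    simp only [Set.mem_setOf_eq, Finset.coe_Ico, Set.mem_Ico]
    rw [show ((rk P d + 1 : ℕ) : ℤ) = (rk P d : ℤ) + 1 by push_cast; ring]
    exact keyB hd m
  rw [hset, Set.ncard_coe_finset, Int.card_Ico]
  omega

theorem psi_cfun {P : Finset ℕ} (hpos : ∀ x ∈ P, 0 < x) : psi (cfun P) = P := by
  have hC := cfun_castelnuovo hpos
  have hsig : sigma (cfun P) = P.card :=
    spec_unique hC (sigma_spec hC) ⟨fun i hi => cfun_stair hpos i hi, fun m hm => cfun_dec m hm⟩
  symm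
  apply Finset.eq_of_subset_of_card_le
  · intro d hd
    rw [psi, Finset.mem_image]
    exact ⟨rk P d, by rw [Finset.mem_range, hsig]; exact rk_lt_card hd, tval_cfun hd⟩
  · rw [psi_card hC, hsig]

end CastAux

open CastAux in
/-- The number of Castelnuovo functions of weight `n` equals the number of
partitions of `n` into distinct parts. -/
theorem castelnuovo_card_eq_distincts_card (n : ℕ) :
    Nat.card {s : ℤ → ℤ // CastelnuovoZ s ∧ ∑ᶠ m : ℤ, s m = (n : ℤ)} =
      (Nat.Partition.distincts n).card := by
  classical
  have e1 : {s : ℤ → ℤ // CastelnuovoZ s ∧ ∑ᶠ m : ℤ, s m = (n : ℤ)} ≃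
      {P : Finset ℕ // (∀ x ∈ P, 0 < x) ∧ ∑ d ∈ P, d = n} := by
    refine ⟨fun x => ⟨psi x.1, psi_pos x.2.1, ?_⟩,
            fun y => ⟨cfun y.1, cfun_castelnuovo y.2.1, ?_⟩, ?_, ?_⟩
    · have h1 := weight_eq_psi_sum x.2.1
      have h2 := x.2.2
      have h3 : (∑ d ∈ psi x.1, (d : ℤ)) = (n : ℤ) := by rw [← h1, h2]
      rw [← Nat.cast_sum] at h3
      exact Nat.cast_injective h3
    · rw [cfun_weight y.2.1, ← Nat.cast_sum, y.2.2]
    · intro x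
      apply Subtype.ext
      funext i
      exact cfun_psi x.2.1 i
    · intro y
      apply Subtype.ext
      exact psi_cfun y.2.1
  have e2 : {P : Finset ℕ // (∀ x ∈ P, 0 < x) ∧ ∑ d ∈ P, d = n} ≃
      {p : n.Partition // p ∈ Nat.Partition.distincts n} := by
    have sum_val : ∀ Q : Finset ℕ, ∑ d ∈ Q, d = Q.val.sum := by
      intro Q
      have : ∑ d ∈ Q, d = (Q.val.map id).sum := rfl
      rwa [Multiset.map_id] at this
    refine ⟨fun P => ⟨⟨P.1.val, fun {i} hi => P.2.1 i hi, by rw [← sum_val]; exact P.2.2⟩, ?_⟩,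
            fun p => ⟨p.1.parts.toFinset, fun x hx => p.1.parts_pos (Multiset.mem_toFinset.mp hx), ?_⟩,
            ?_, ?_⟩
    · simp only [Nat.Partition.distincts, Finset.mem_filter, Finset.mem_univ, true_and]
      exact P.1.nodup
    · have hnd : p.1.parts.Nodup := (Finset.mem_filter.mp p.2).2
      rw [sum_val, Multiset.toFinset_val, Multiset.dedup_eq_self.mpr hnd]
      exact p.1.parts_sum
    · intro P
      apply Subtype.ext
      exact Finset.val_toFinset _
    · intro p
      apply Subtype.ext
      apply Nat.Partition.ext
      have hnd : p.1.parts.Nodup := (Finset.mem_filter.mp p.2).2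
      exact (Multiset.toFinset_val _).trans (Multiset.dedup_eq_self.mpr hnd)
  rw [← Nat.card_eq_finsetCard]
  exact Nat.card_congr (e1.trans e2)
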